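/- If A = {a_k} is a strictly increasing sequence of positive integers with a_k ~ α k^h for some α > 0 and h ≥ 2, and 0 < β < α, then there exists a strictly increasing sequence of positive integers B = {b_n} with b_n ~ β n^h such that A is a subsequence of B. -/

import Mathlib

open Filter

/-- Auxiliary recursive sequence: positions of `a k` inside the supersequence. -/
private def Nseq (a c : ℕ → ℕ) : ℕ → ℕ
  | 0 => 0
  | k + 1 => min (Nseq a c k + (a (k + 1) - a k)) (c (k + 1))

set_option maxHeartbeats 2000000 in
/-- If `A = {a_k}` is a strictly increasing sequence of positive integers with
`a_k ~ α k^h` (`α > 0`, `h ≥ 2`) and `0 < β < α`, then `A` has a strictly increasing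
supersequence `B = {b_n}` of positive integers with `b_n ~ β n^h`. -/
theorem stmt19 (h : ℕ) (hh : 2 ≤ h) (α β : ℝ) (hα : 0 < α) (hβ : 0 < β) (hβα : β < α)
    (a : ℕ → ℕ) (ha : StrictMono a) (hapos : ∀ k, 0 < a k)
    (h1 : Filter.Tendsto (fun k : ℕ => (a k : ℝ) / (α * (k : ℝ) ^ h)) Filter.atTop
      (nhds 1)) :
    ∃ b : ℕ → ℕ, StrictMono b ∧ (∀ n, 0 < b n) ∧
      Filter.Tendsto (fun n : ℕ => (b n : ℝ) / (β * (n : ℝ) ^ h)) Filter.atTop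
        (nhds 1) ∧
      ∃ idx : ℕ → ℕ, StrictMono idx ∧ ∀ k, b (idx k) = a k := by
  have hh0 : h ≠ 0 := by omega
  have hab : (1 : ℝ) < α / β := (one_lt_div hβ).2 hβα
  set r : ℝ := (α / β) ^ ((h : ℝ)⁻¹) with hr_def
  have hr1 : 1 < r := by
    exact (Real.one_lt_rpow_iff_of_pos (by linarith)).2 (Or.inl ⟨hab, by positivity⟩)
  have hr0 : 0 < r := lt_trans one_pos hr1
  have hrh : r ^ h = α / β := by
    rw [hr_def, ← Real.rpow_natCast ((α / β) ^ ((h:ℝ)⁻¹)) h, ← Real.rpow_mul (by positivity),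
      inv_mul_cancel₀ (by exact_mod_cast hh0), Real.rpow_one]
  set c : ℕ → ℕ := fun j => ⌈r * j⌉₊ with hc_def
  have hc0 : c 0 = 0 := by simp [hc_def]
  have hclb : ∀ j : ℕ, r * j ≤ c j := fun j => Nat.le_ceil _
  have hcub : ∀ j : ℕ, (c j : ℝ) ≤ r * j + 1 :=
    fun j => le_of_lt (Nat.ceil_lt_add_one (by positivity))
  have hcstep : ∀ j : ℕ, c j + 1 ≤ c (j + 1) := by
    intro j
    have h1' : (⌈r * j⌉₊ : ℕ) + 1 = ⌈r * j + 1⌉₊ := by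
      rw [Nat.ceil_add_one (by positivity)]
    have : r * j + 1 ≤ r * (j + 1) := by
      have : (j : ℝ) + 1 = ((j + 1 : ℕ) : ℝ) := by push_cast; ring
      nlinarith [hr1]
    calc c j + 1 = ⌈r * j + 1⌉₊ := h1'
      _ ≤ ⌈r * ((j : ℝ) + 1)⌉₊ := Nat.ceil_le_ceil this
      _ = c (j + 1) := by norm_num [hc_def]
  set N : ℕ → ℕ := Nseq a c with hN_def
  have hN0 : N 0 = 0 := rfl
  have hNsucc : ∀ k, N (k + 1) = min (N k + (a (k + 1) - a k)) (c (k + 1)) := fun k => rfl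
  have hgap : ∀ k, a k + 1 ≤ a (k + 1) := fun k => ha (Nat.lt_succ_self k)
  have hNle_c : ∀ k, N k ≤ c k := by
    intro k
    cases k with
    | zero => simp [hN0]
    | succ k => exact (hNsucc k ▸ min_le_right _ _)
  have hNstep : ∀ k, N (k + 1) ≤ N k + (a (k + 1) - a k) := fun k =>
    (hNsucc k ▸ min_le_left _ _)
  have hNmono : StrictMono N := by
    apply strictMono_nat_of_lt_succ
    intro k
    rw [hNsucc k]
    apply lt_min
    · have := hgap k; omega
    · have := hcstep k; have := hNle_c k; omega
  have hNk_ge : ∀ k, k ≤ N k := fun k => hNmono.le_apply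
  -- key lower-bound structure for N
  have hP4 : ∀ k, ∃ j, j ≤ k ∧ c j + a k ≤ N k + a j := by
    intro k
    induction k with
    | zero => exact ⟨0, le_rfl, by simp [hN0, hc0]⟩
    | succ k ih =>
      rcases le_or_gt (c (k + 1)) (N k + (a (k + 1) - a k)) with hcase | hcase
      · exact ⟨k + 1, le_rfl, by rw [hNsucc k, min_eq_right hcase]⟩
      · obtain ⟨j, hjk, hji⟩ := ih
        refine ⟨j, hjk.trans (Nat.le_succ k), ?_⟩
        rw [hNsucc k, min_eq_left hcase.le]
        have := hgap k; omega
  set K : ℕ → ℕ := fun n => Nat.findGreatest (fun k => N k ≤ n) n with hK_def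
  have hKle : ∀ n, N (K n) ≤ n := by
    intro n
    exact Nat.findGreatest_spec (P := fun k => N k ≤ n) (Nat.zero_le n) (by simp [hN0])
  have hK_ge : ∀ k n, N k ≤ n → k ≤ K n := by
    intro k n hkn
    exact Nat.le_findGreatest ((hNk_ge k).trans hkn) hkn
  have hKlt : ∀ n, n < N (K n + 1) := by
    intro n
    by_contra hcon
    push_neg at hcon
    have hgr := Nat.findGreatest_is_greatest (P := fun k => N k ≤ n) (k := K n + 1) (n := n)
      (Nat.lt_succ_self _) ((hNk_ge _).trans hcon)
    exact hgr hcon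
  have hKNk : ∀ k, K (N k) = k := by
    intro k
    refine le_antisymm ?_ (hK_ge k (N k) le_rfl)
    exact (hNmono.le_iff_le).1 (hKle (N k))
  set b : ℕ → ℕ := fun n => a (K n) + (n - N (K n)) with hb_def
  have hbidx : ∀ k, b (N k) = a k := by
    intro k; simp [hb_def, hKNk k]
  have hKsucc : ∀ n, K (n + 1) = K n ∨ (K (n + 1) = K n + 1 ∧ n + 1 = N (K n + 1)) := by
    intro n
    have h1' : K n ≤ K (n + 1) := hK_ge _ _ ((hKle n).trans (Nat.le_succ n))
    have h2' : n + 1 ≤ N (K n + 1) := hKlt n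
    have h3' : N (K (n + 1)) ≤ n + 1 := hKle (n + 1)
    have h4' : K (n + 1) ≤ K n + 1 := by
      by_contra hcon
      push_neg at hcon
      have : N (K n + 1) < N (K (n + 1)) := hNmono hcon
      omega
    rcases eq_or_lt_of_le h4' with heq | hlt
    · right
      refine ⟨heq, ?_⟩
      have := heq ▸ h3'
      omega
    · left; omega
  have hbmono : StrictMono b := by
    apply strictMono_nat_of_lt_succ
    intro n
    rcases hKsucc n with heq | ⟨heq, hNeq⟩
    · simp only [hb_def, heq]
      have := hKle n
      omega
    · have hb1 : b (n + 1) = a (K n + 1) := by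
        rw [hNeq]; exact hbidx (K n + 1)
      rw [hb1]
      simp only [hb_def]
      have e1 := hKle n
      have e2 : n < N (K n + 1) := hKlt n
      have e3 := hNstep (K n)
      have e4 := hgap (K n)
      omega
  have hbpos : ∀ n, 0 < b n := fun n => lt_of_lt_of_le (hapos (K n)) (Nat.le_add_right _ _)
  have hKtop : Tendsto K atTop atTop :=
    tendsto_atTop_atTop.2 fun k => ⟨N k, fun n hn => hK_ge k n hn⟩
  -- Asymptotics of N
  have hClaimLow : ∀ ε : ℝ, 0 < ε → ∀ᶠ k : ℕ in atTop, (r - ε) * k ≤ (N k : ℝ) := by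
    intro ε hε
    set δ : ℝ := min (ε / r) 1 / 2 with hδ_def
    have hδ0 : 0 < δ := by
      have h1' : 0 < min (ε / r) 1 := lt_min (div_pos hε hr0) one_pos
      rw [hδ_def]; linarith
    have hδ1 : δ < 1 := by
      have := min_le_right (ε / r) 1
      rw [hδ_def]; linarith
    have hδε : r * δ ≤ ε / 2 := by
      have h1' : δ ≤ (ε / r) / 2 := by
        have := min_le_left (ε / r) 1
        rw [hδ_def]; linarith
      have h2' : r * ((ε / r) / 2) = ε / 2 := by
        field_simp
      nlinarith [hr0]
    set s : ℝ := (1 - δ) ^ h with hs_def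
    have hs0 : 0 ≤ s := pow_nonneg (by linarith) h
    have hs1 : s < 1 := pow_lt_one₀ (by linarith) (by linarith) hh0
    set δ' : ℝ := (1 - s) / (2 * (1 + s)) with hδ'_def
    have hδ'0 : 0 < δ' := by
      apply div_pos <;> nlinarith
    set ρ : ℝ := (1 - s) / 2 with hρ_def
    have hρ0 : 0 < ρ := by rw [hρ_def]; linarith
    have hkey : (1 - δ') - (1 + δ') * s = ρ := by
      rw [hδ'_def, hρ_def]
      field_simp
      ring
    obtain ⟨M, hM⟩ := Metric.tendsto_atTop.1 h1 δ' hδ'0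
    set M1 : ℕ := max M 1 with hM1_def
    have hbound : ∀ m : ℕ, M1 ≤ m →
        (1 - δ') * (α * (m : ℝ) ^ h) ≤ (a m : ℝ) ∧
          (a m : ℝ) ≤ (1 + δ') * (α * (m : ℝ) ^ h) := by
      intro m hm'
      have h1m : (1 : ℝ) ≤ (m : ℝ) := by
        exact_mod_cast le_trans (le_max_right M 1) hm'
      have hpos : 0 < α * (m : ℝ) ^ h := by positivity
      have hd := hM m (le_trans (le_max_left M 1) hm')
      rw [Real.dist_eq, abs_lt] at hd
      constructor
      · have h2' : (1 - δ') ≤ (a m : ℝ) / (α * (m : ℝ) ^ h) := by linarith [hd.1]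
        exact (le_div_iff₀ hpos).1 h2'
      · have h2' : (a m : ℝ) / (α * (m : ℝ) ^ h) ≤ 1 + δ' := by linarith [hd.2]
        exact (div_le_iff₀ hpos).1 h2'
    have hEv2 : ∀ᶠ k : ℕ in atTop, (M1 : ℝ) ≤ (1 - δ) * k := by
      have ht : Tendsto (fun k : ℕ => (1 - δ) * (k : ℝ)) atTop atTop :=
        (tendsto_natCast_atTop_atTop).const_mul_atTop (by linarith)
      exact ht.eventually_ge_atTop _
    have hEv3 : ∀ᶠ k : ℕ in atTop, r / (α * ρ) ≤ (k : ℝ) :=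
      tendsto_natCast_atTop_atTop.eventually_ge_atTop _
    filter_upwards [eventually_ge_atTop M1, hEv2, hEv3] with k hk1 hk2 hk3
    have hk1R : (1 : ℝ) ≤ (k : ℝ) := by
      exact_mod_cast le_trans (le_max_right M 1) hk1
    set m : ℕ := ⌊(1 - δ) * (k : ℝ)⌋₊ with hm_def
    have hmM : M1 ≤ m := Nat.le_floor hk2
    have hmle : (m : ℝ) ≤ (1 - δ) * k :=
      Nat.floor_le (mul_nonneg (by linarith) (by positivity))
    have hma : (a m : ℝ) ≤ (1 + δ') * (α * (s * (k : ℝ) ^ h)) := by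
      have h2' := (hbound m hmM).2
      have h3' : (m : ℝ) ^ h ≤ ((1 - δ) * k) ^ h :=
        pow_le_pow_left₀ (by positivity) hmle h
      have h4' : ((1 - δ) * (k : ℝ)) ^ h = s * (k : ℝ) ^ h := by
        rw [mul_pow, hs_def]
      calc (a m : ℝ) ≤ (1 + δ') * (α * (m : ℝ) ^ h) := h2'
        _ ≤ (1 + δ') * (α * (s * (k : ℝ) ^ h)) := by
            apply mul_le_mul_of_nonneg_left _ (by linarith)
            apply mul_le_mul_of_nonneg_left _ hα.le
            rw [← h4']
            exact h3'
    have hak : (1 - δ') * (α * (k : ℝ) ^ h) ≤ (a k : ℝ) := (hbound k hk1).1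
    have hkh2 : (k : ℝ) ^ 2 ≤ (k : ℝ) ^ h := pow_le_pow_right₀ hk1R hh
    have hrk : r * k ≤ ρ * (α * (k : ℝ) ^ h) := by
      have h2' : r ≤ (k : ℝ) * (α * ρ) := (div_le_iff₀ (by positivity)).1 hk3
      calc r * k ≤ ((k : ℝ) * (α * ρ)) * k := mul_le_mul_of_nonneg_right h2' (by positivity)
        _ = (α * ρ) * (k : ℝ) ^ 2 := by ring
        _ ≤ (α * ρ) * (k : ℝ) ^ h := mul_le_mul_of_nonneg_left hkh2 (by positivity)
        _ = ρ * (α * (k : ℝ) ^ h) := by ring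
    have hdiff : ρ * (α * (k : ℝ) ^ h) ≤ (a k : ℝ) - (a m : ℝ) := by
      have hX : (1 + δ') * (α * (s * (k : ℝ) ^ h)) = ((1 + δ') * s) * (α * (k : ℝ) ^ h) := by
        ring
      have h5' : (1 - δ') * (α * (k : ℝ) ^ h) - ((1 + δ') * s) * (α * (k : ℝ) ^ h)
          ≤ (a k : ℝ) - (a m : ℝ) := by
        rw [← hX]
        linarith [hak, hma]
      have h6' : (1 - δ') * (α * (k : ℝ) ^ h) - ((1 + δ') * s) * (α * (k : ℝ) ^ h)
          = ((1 - δ') - (1 + δ') * s) * (α * (k : ℝ) ^ h) := by ring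
      rw [h6', hkey] at h5'
      linarith
    obtain ⟨j, hjk, hjineq⟩ := hP4 k
    have hjR : (c j : ℝ) + (a k : ℝ) ≤ (N k : ℝ) + (a j : ℝ) := by exact_mod_cast hjineq
    rcases le_or_gt j m with hjm | hjm
    · have haj : (a j : ℝ) ≤ (a m : ℝ) := by exact_mod_cast ha.monotone hjm
      have hcj0 : (0 : ℝ) ≤ (c j : ℝ) := by positivity
      have hεk : (0 : ℝ) ≤ ε * (k : ℝ) := mul_nonneg hε.le (by positivity)
      linarith
    · have hcj : r * j ≤ (c j : ℝ) := hclb j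
      have hj1 : (m : ℝ) + 1 ≤ (j : ℝ) := by exact_mod_cast hjm
      have hfl : (1 - δ) * (k : ℝ) < (m : ℝ) + 1 := Nat.lt_floor_add_one _
      have haj : a j ≤ a k := ha.monotone hjk
      have hNc : (c j : ℝ) ≤ (N k : ℝ) := by
        have : c j ≤ N k := by omega
        exact_mod_cast this
      have e1 : r * ((m : ℝ) + 1) ≤ r * j := mul_le_mul_of_nonneg_left hj1 hr0.le
      have e2 : r * ((1 - δ) * (k : ℝ)) ≤ r * ((m : ℝ) + 1) :=
        mul_le_mul_of_nonneg_left hfl.le hr0.le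
      have e3 : (r * δ) * (k : ℝ) ≤ (ε / 2) * k :=
        mul_le_mul_of_nonneg_right hδε (by positivity)
      have hεk : (0 : ℝ) ≤ ε * (k : ℝ) := mul_nonneg hε.le (by positivity)
      linarith
  have hClaimA : Tendsto (fun k : ℕ => (N k : ℝ) / k) atTop (nhds r) := by
    rw [Metric.tendsto_nhds]
    intro ε hε
    filter_upwards [hClaimLow (ε / 2) (by positivity), eventually_gt_atTop 0,
      tendsto_natCast_atTop_atTop.eventually_gt_atTop (1 / ε)] with k h1k h2k h3k
    rw [Real.dist_eq, abs_lt]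
    have hk0 : (0 : ℝ) < k := by exact_mod_cast h2k
    have hub : (N k : ℝ) ≤ r * k + 1 := by
      have := hcub k
      have h2 : (N k : ℝ) ≤ (c k : ℝ) := by exact_mod_cast hNle_c k
      linarith only [this, h2]
    constructor
    · have h4 : (r - ε / 2) ≤ (N k : ℝ) / k := by
        rw [le_div_iff₀ hk0]; linarith only [h1k]
      linarith only [h4, hε]
    · have h4 : (N k : ℝ) / k ≤ r + 1 / k := by
        rw [div_le_iff₀ hk0]
        have : (r + 1 / k) * k = r * k + 1 := by field_simp
        linarith only [this, hub]
      have h5 : 1 / (k : ℝ) < ε := by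
        rw [div_lt_iff₀ hk0]
        have h6 : ε * (1 / ε) < ε * k := mul_lt_mul_of_pos_left h3k hε
        have h7 : ε * (1 / ε) = 1 := by field_simp
        linarith only [h6, h7]
      linarith only [h4, h5]
  -- generic ratio lemma
  have hratio : ∀ M : ℕ → ℕ, Tendsto (fun k : ℕ => (M k : ℝ) / k) atTop (nhds r) →
      Tendsto (fun k : ℕ => (α * (k : ℝ) ^ h) / (β * (M k : ℝ) ^ h)) atTop (nhds 1) := by
    intro M hM
    have h2 : Tendsto (fun k : ℕ => ((k : ℝ) / (M k))) atTop (nhds r⁻¹) := by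
      have := hM.inv₀ (ne_of_gt hr0)
      simpa [inv_div] using this
    have h3 := (h2.pow h).const_mul (α / β)
    have hval : (α / β) * (r⁻¹) ^ h = 1 := by
      rw [inv_pow, hrh]
      field_simp
    rw [hval] at h3
    apply h3.congr
    intro k
    rw [div_pow, div_mul_div_comm]
  have hone : Tendsto (fun k : ℕ => (1 : ℝ) / k) atTop (nhds 0) :=
    tendsto_one_div_atTop_nhds_zero_nat
  have hNdiv1 : Tendsto (fun k : ℕ => ((N (k + 1) : ℝ)) / k) atTop (nhds r) := by
    have h0 : Tendsto (fun k : ℕ => (N (k + 1) : ℝ) / (k + 1)) atTop (nhds r) := by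
      have := hClaimA.comp (tendsto_add_atTop_nat 1)
      apply this.congr
      intro k
      norm_num [Function.comp]
    have h2 : Tendsto (fun k : ℕ => ((k : ℝ) + 1) / k) atTop (nhds 1) := by
      have : Tendsto (fun k : ℕ => 1 + 1 / (k : ℝ)) atTop (nhds 1) := by
        have := (tendsto_const_nhds :
          Tendsto (fun _ : ℕ => (1 : ℝ)) atTop (nhds 1)).add hone
        simpa using this
      apply this.congr'
      filter_upwards [eventually_gt_atTop 0] with k hk
      have hk0 : (k : ℝ) ≠ 0 := by positivity
      field_simp
    have h3 := h0.mul h2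
    rw [mul_one] at h3
    apply h3.congr'
    filter_upwards [eventually_gt_atTop 0] with k hk
    have hk0 : (k : ℝ) ≠ 0 := by positivity
    have hk10 : ((k : ℝ) + 1) ≠ 0 := by positivity
    rw [div_mul_div_comm, mul_comm ((N (k + 1) : ℝ)) ((k : ℝ) + 1), mul_div_mul_left _ _ hk10]
  have hf : Tendsto (fun k : ℕ => (a k : ℝ) / (β * (N (k + 1) : ℝ) ^ h)) atTop (nhds 1) := by
    have hw := hratio (fun k => N (k + 1)) hNdiv1
    have h3 := h1.mul hw
    rw [mul_one] at h3
    apply h3.congr'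
    filter_upwards [eventually_gt_atTop 0] with k hk
    have hk0 : α * (k : ℝ) ^ h ≠ 0 := by positivity
    rw [div_mul_div_comm, mul_comm ((a k : ℝ)) (α * (k:ℝ)^h), mul_div_mul_left _ _ hk0]
  have hczero : Tendsto (fun k : ℕ => (c (k + 1) : ℝ) / (α * (k : ℝ) ^ h)) atTop (nhds 0) := by
    have hU : Tendsto (fun k : ℕ => ((2 * r + 1) / α) * (1 / k)) atTop (nhds 0) := by
      have := hone.const_mul ((2 * r + 1) / α)
      simpa using this
    apply tendsto_of_tendsto_of_tendsto_of_le_of_le' tendsto_const_nhds hU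
    · filter_upwards [eventually_ge_atTop 1] with k hk
      positivity
    · filter_upwards [eventually_ge_atTop 1] with k hk
      have hk1 : (1 : ℝ) ≤ (k : ℝ) := by exact_mod_cast hk
      have hnum : (c (k + 1) : ℝ) ≤ (2 * r + 1) * k := by
        have := hcub (k + 1)
        push_cast at this ⊢
        nlinarith [hr1]
      have hden : α * (k : ℝ) ^ 2 ≤ α * (k : ℝ) ^ h := by
        have : (k : ℝ) ^ 2 ≤ (k : ℝ) ^ h := pow_le_pow_right₀ hk1 hh
        nlinarith [hα]
      have hstep : (c (k + 1) : ℝ) / (α * (k : ℝ) ^ h) ≤ ((2 * r + 1) * k) / (α * (k : ℝ) ^ 2) :=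
        div_le_div₀ (by positivity) hnum (by positivity) hden
      have heq2 : ((2 * r + 1) * k) / (α * (k : ℝ) ^ 2) = ((2 * r + 1) / α) * (1 / k) := by
        have hk0 : (k : ℝ) ≠ 0 := by positivity
        field_simp
      rw [heq2] at hstep
      exact hstep
  have hg : Tendsto (fun k : ℕ => ((a k : ℝ) + (c (k + 1) : ℝ)) / (β * (N k : ℝ) ^ h))
      atTop (nhds 1) := by
    have hw := hratio N hClaimA
    have hsum : Tendsto (fun k : ℕ => ((a k : ℝ) + (c (k + 1) : ℝ)) / (α * (k : ℝ) ^ h))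
        atTop (nhds 1) := by
      have := h1.add hczero
      rw [add_zero] at this
      apply this.congr
      intro k
      rw [← add_div]
    have h3 := hsum.mul hw
    rw [mul_one] at h3
    apply h3.congr'
    filter_upwards [eventually_gt_atTop 0] with k hk
    have hk0 : α * (k : ℝ) ^ h ≠ 0 := by positivity
    rw [div_mul_div_comm, mul_comm (((a k : ℝ) + (c (k+1) : ℝ))) (α * (k:ℝ)^h),
      mul_div_mul_left _ _ hk0]
  refine ⟨b, hbmono, hbpos, ?_, N, hNmono, hbidx⟩
  apply tendsto_of_tendsto_of_tendsto_of_le_of_le' (hf.comp hKtop) (hg.comp hKtop)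
  · -- lower bound
    filter_upwards [eventually_ge_atTop (N 1)] with n hn
    have hK1 : 1 ≤ K n := hK_ge 1 n hn
    have hn1 : 1 ≤ n := le_trans (hNk_ge 1) hn
    have hden : (0 : ℝ) < β * (n : ℝ) ^ h := by positivity
    have hnum : (a (K n) : ℝ) ≤ (b n : ℝ) := by
      exact_mod_cast Nat.le_add_right _ _
    have hdle : β * (n : ℝ) ^ h ≤ β * (N (K n + 1) : ℝ) ^ h := by
      have : (n : ℝ) ≤ (N (K n + 1) : ℝ) := by exact_mod_cast (hKlt n).le
      have hn0 : (0:ℝ) ≤ (n:ℝ) := by positivity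
      exact mul_le_mul_of_nonneg_left (pow_le_pow_left₀ hn0 this h) hβ.le
    exact div_le_div₀ (by positivity) hnum hden hdle
  · -- upper bound
    filter_upwards [eventually_ge_atTop (N 1)] with n hn
    have hK1 : 1 ≤ K n := hK_ge 1 n hn
    have hNK1 : 1 ≤ N (K n) := le_trans hK1 (hNk_ge _)
    have hden : (0 : ℝ) < β * (N (K n) : ℝ) ^ h := by
      have : (1:ℝ) ≤ (N (K n) : ℝ) := by exact_mod_cast hNK1
      positivity
    have hnum : (b n : ℝ) ≤ (a (K n) : ℝ) + (c (K n + 1) : ℝ) := by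
      have e1 : n < N (K n + 1) := hKlt n
      have e2 : N (K n + 1) ≤ c (K n + 1) := hNle_c _
      have : b n ≤ a (K n) + c (K n + 1) := by
        simp only [hb_def]; omega
      exact_mod_cast this
    have hdle : β * (N (K n) : ℝ) ^ h ≤ β * (n : ℝ) ^ h := by
      have : ((N (K n)) : ℝ) ≤ (n : ℝ) := by exact_mod_cast hKle n
      exact mul_le_mul_of_nonneg_left (pow_le_pow_left₀ (by positivity) this h) hβ.le
    exact div_le_div₀ (by positivity) hnum hden hdle
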